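/- For all integers p ≥ 0, q with |q| ≤ p, m ≥ 0, and all real x, y, z, the polynomial T_{p,m}^q satisfies the Cartesian expansion T_{p,m}^q(x,y,z) = (s·i)^{|q|} · Σ_{μ=0}^{|q|} (s·i)^μ C(|q|,μ) · Σ_{ν=0}^{⌊(p−|q|)/2⌋} b_ν · Σ_{α=0}^{m+ν} C(m+ν,α) z^{p−|q|+2m−2α} · Σ_{β=0}^{α} C(α,β) y^{|q|+2β−μ} x^{2α−2β+μ}, where b_ν = ((−1)^ν / 2^ν) · (2p−2ν−1)!! / (ν! (p−|q|−2ν)!), C(n,r) denotes the binomial coefficient, and (2p−2ν−1)!! is the double factorial with the convention (−1)!! = 1. -/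

import Mathlib

/-- The Cartesian polynomial `T_{p,m}^q(x,y,z)`, the complex conjugate of
`R_{p,m}^q(x) = ‖x‖^{2m+p} Y_p^q(x/‖x‖) / C_Y(p,q)` (a regular solid harmonic
weighted by `‖x‖^{2m}`). Here `s = 1` if `q ≥ 0` and `s = -1` if `q < 0`. -/
noncomputable def solidT (p m : ℕ) (q : ℤ) (x y z : ℝ) : ℂ :=
  ((-1 : ℂ) ^ q.natAbs / 2 ^ p) *
    ((x : ℂ) - (if 0 ≤ q then (1 : ℂ) else -1) * Complex.I * (y : ℂ)) ^ q.natAbs *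
    ∑ ν ∈ Finset.range ((p - q.natAbs) / 2 + 1),
      ((-1 : ℂ) ^ ν * (Nat.factorial (2 * p - 2 * ν) : ℂ) /
          ((Nat.factorial ν : ℂ) * (Nat.factorial (p - ν) : ℂ) *
            (Nat.factorial (p - q.natAbs - 2 * ν) : ℂ))) *
        (((x ^ 2 + y ^ 2 + z ^ 2 : ℝ) : ℂ)) ^ (m + ν) * (z : ℂ) ^ (p - q.natAbs - 2 * ν)

/-- The integral `I_m(p,q,k) = ∫_{[-1,1]³} T_{p,m}^q(x₁,x₂,x₃) φ^{k₁}(x₁) φ^{k₂}(x₂) φ^{k₃}(x₃) dx`. -/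
noncomputable def solidI (φ : ℕ → Polynomial ℝ) (p m : ℕ) (q : ℤ) (k₁ k₂ k₃ : ℕ) : ℂ :=
  ∫ x₁ in (-1:ℝ)..1, ∫ x₂ in (-1:ℝ)..1, ∫ x₃ in (-1:ℝ)..1,
    solidT p m q x₁ x₂ x₃ *
      (((φ k₁).eval x₁ * (φ k₂).eval x₂ * (φ k₃).eval x₃ : ℝ) : ℂ)

lemma two_mul_fact (n : ℕ) : (2*n).factorial = 2^n * n.factorial * Nat.doubleFactorial (2*n-1) := by
  induction n with
  | zero => rfl
  | succ k ih =>
    rcases Nat.eq_zero_or_pos k with hk | hk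
    · subst hk; decide
    · have h1 : 2*(k+1) = 2*k + 1 + 1 := by ring
      rw [h1, Nat.factorial_succ, Nat.factorial_succ, ih, Nat.factorial_succ]
      have h5 : 2*k+1+1-1 = (2*k-1)+2 := by omega
      rw [h5, Nat.doubleFactorial_add_two]
      have h4 : 2*k - 1 + 2 = 2*k+1 := by omega
      rw [h4]; ring

lemma sign_aux (u : ℂ) (hu : u * u = -1) {n μ : ℕ} (h : μ ≤ n) :
    u ^ n * u ^ μ = (-1:ℂ) ^ n * (-1:ℂ) ^ (n - μ) * u ^ (n - μ) := by
  obtain ⟨k, rfl⟩ := Nat.exists_eq_add_of_le h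
  rw [Nat.add_sub_cancel_left]
  have h1 : u ^ (μ + k) * u ^ μ = (u*u) ^ μ * u ^ k := by ring
  have h2 : ((-1:ℂ)) ^ (μ + k) * (-1:ℂ)^k = (-1:ℂ)^μ * ((-1:ℂ)*(-1))^k := by
    rw [← pow_add, show μ+k+k = μ+2*k by ring, pow_add, pow_mul]
    norm_num
  rw [h1, hu, h2]
  norm_num

set_option maxHeartbeats 8000000 in
/-- The Cartesian expansion of `T_{p,m}^q`, obtained by expanding
`(x - s i y)^{|q|}` and `(x²+y²+z²)^{m+ν}`. -/
theorem solidT_cartesian_expansion (p m : ℕ) (q : ℤ) (hq : q.natAbs ≤ p) :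
    ∀ x y z : ℝ,
      solidT p m q x y z
        = ((if 0 ≤ q then (1 : ℂ) else -1) * Complex.I) ^ q.natAbs *
            ∑ μ ∈ Finset.range (q.natAbs + 1),
              ((if 0 ≤ q then (1 : ℂ) else -1) * Complex.I) ^ μ *
                (Nat.choose q.natAbs μ : ℂ) *
              ∑ ν ∈ Finset.range ((p - q.natAbs) / 2 + 1),
                (((-1 : ℂ) ^ ν / 2 ^ ν) * (Nat.doubleFactorial (2 * p - 2 * ν - 1) : ℂ) /
                    ((Nat.factorial ν : ℂ) * (Nat.factorial (p - q.natAbs - 2 * ν) : ℂ))) *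
                ∑ α ∈ Finset.range (m + ν + 1),
                  (Nat.choose (m + ν) α : ℂ) * (z : ℂ) ^ (p - q.natAbs + 2 * m - 2 * α) *
                  ∑ β ∈ Finset.range (α + 1),
                    (Nat.choose α β : ℂ) * (y : ℂ) ^ (q.natAbs + 2 * β - μ) *
                      (x : ℂ) ^ (2 * α - 2 * β + μ) := by
  intro x y z
  set s : ℂ := (if 0 ≤ q then (1:ℂ) else -1) with hs
  have hs2 : (s * Complex.I) * (s * Complex.I) = -1 := by
    have : s * s = 1 := by rw [hs]; split <;> norm_num
    calc (s*Complex.I)*(s*Complex.I) = (s*s) * (Complex.I*Complex.I) := by ring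
    _ = -1 := by rw [this, Complex.I_mul_I]; norm_num
  unfold solidT
  rw [← hs]
  push_cast
  have hxy : ((x:ℂ) - s * Complex.I * y) = ((x:ℂ) + -(s * Complex.I * y)) := by ring
  have hsum : ((x:ℂ)^2 + y^2 + z^2) = ((y:ℂ)^2 + x^2) + z^2 := by ring
  rw [hxy, hsum]
  simp only [add_pow]
  simp only [Finset.sum_mul, Finset.mul_sum]
  conv_rhs => rw [Finset.sum_comm]
  refine Finset.sum_congr rfl fun ν hν => ?_
  conv_rhs => rw [Finset.sum_comm]
  refine Finset.sum_congr rfl fun α hα => ?_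
  conv_rhs => rw [Finset.sum_comm]
  refine Finset.sum_congr rfl fun β hβ => ?_
  refine Finset.sum_congr rfl fun μ hμ => ?_
  simp only [Finset.mem_range] at hμ hν hα hβ
  have hμ' : μ ≤ q.natAbs := by omega
  have h2ν : 2*ν ≤ p - q.natAbs := by omega
  have hν' : ν ≤ p := by omega
  have hα' : α ≤ m + ν := by omega
  have hβ' : β ≤ α := by omega
  have hfac : (((2*p - 2*ν).factorial : ℕ) : ℂ)
      = 2^(p-ν) * (((p-ν).factorial : ℕ) : ℂ) * (((2*p-2*ν-1).doubleFactorial : ℕ) : ℂ) := by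
    rw [show 2*p-2*ν = 2*(p-ν) by omega]
    exact_mod_cast congrArg (Nat.cast : ℕ → ℂ) (two_mul_fact (p-ν))
  have h2p : (2:ℂ)^p = 2^(p-ν) * 2^ν := by rw [← pow_add]; congr 1; omega
  have hze : p - q.natAbs + 2*m - 2*α = (p - q.natAbs - 2*ν) + (m+ν-α)*2 := by omega
  have hye : q.natAbs + 2*β - μ = (q.natAbs - μ) + β*2 := by omega
  have hxe : 2*α - 2*β + μ = μ + (α-β)*2 := by omega
  have h3 : (s*Complex.I)^μ * (s*Complex.I)^μ = (-1:ℂ)^μ := by rw [← mul_pow, hs2]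
  have hu : (s*Complex.I)^(q.natAbs - μ)
      = (-1:ℂ)^μ * ((s*Complex.I)^q.natAbs * (s*Complex.I)^μ) := by
    obtain ⟨k, hk⟩ := Nat.exists_eq_add_of_le hμ'
    rw [hk, Nat.add_sub_cancel_left, pow_add]
    rw [show (-1:ℂ)^μ * ((s*Complex.I)^μ * (s*Complex.I)^k * (s*Complex.I)^μ)
        = ((-1:ℂ)^μ * ((s*Complex.I)^μ * (s*Complex.I)^μ)) * (s*Complex.I)^k from by ring,
      h3, ← mul_pow]
    norm_num
  have hneg : (-(s*Complex.I*(y:ℂ)))^(q.natAbs-μ)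
      = (-1:ℂ)^(q.natAbs-μ) * ((s*Complex.I)^(q.natAbs-μ) * (y:ℂ)^(q.natAbs-μ)) := by
    rw [neg_pow, mul_pow]
  rw [hfac, h2p, hze, hye, hxe, hneg, hu, pow_add, pow_add, pow_add,
    pow_mul, pow_mul, pow_mul]
  have f1 : ((ν.factorial : ℕ) : ℂ) ≠ 0 := Nat.cast_ne_zero.mpr ν.factorial_ne_zero
  have f2 : (((p-ν).factorial : ℕ) : ℂ) ≠ 0 := Nat.cast_ne_zero.mpr (p-ν).factorial_ne_zero
  have f3 : (((p - q.natAbs - 2*ν).factorial : ℕ) : ℂ) ≠ 0 :=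
    Nat.cast_ne_zero.mpr (p - q.natAbs - 2*ν).factorial_ne_zero
  have f4 : (2:ℂ)^(p-ν) ≠ 0 := pow_ne_zero _ two_ne_zero
  have f5 : (2:ℂ)^ν ≠ 0 := pow_ne_zero _ two_ne_zero
  rcases Nat.even_or_odd μ with hb | hb <;> rcases Nat.even_or_odd q.natAbs with hc | hc
  · have hbm : μ % 2 = 0 := Nat.even_iff.mp hb
    have hcm : q.natAbs % 2 = 0 := Nat.even_iff.mp hc
    have r1 : (-1:ℂ)^μ = 1 := hb.neg_one_pow
    have r2 : (-1:ℂ)^q.natAbs = 1 := hc.neg_one_pow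
    have r3 : (-1:ℂ)^(q.natAbs-μ) = 1 := Even.neg_one_pow (Nat.even_iff.mpr (by omega))
    rw [r1, r2, r3]
    field_simp
    ring
  · have hbm : μ % 2 = 0 := Nat.even_iff.mp hb
    have hcm : q.natAbs % 2 = 1 := Nat.odd_iff.mp hc
    have r1 : (-1:ℂ)^μ = 1 := hb.neg_one_pow
    have r2 : (-1:ℂ)^q.natAbs = -1 := hc.neg_one_pow
    have r3 : (-1:ℂ)^(q.natAbs-μ) = -1 := Odd.neg_one_pow (Nat.odd_iff.mpr (by omega))
    rw [r1, r2, r3]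
    field_simp
    ring
  · have hbm : μ % 2 = 1 := Nat.odd_iff.mp hb
    have hcm : q.natAbs % 2 = 0 := Nat.even_iff.mp hc
    have r1 : (-1:ℂ)^μ = -1 := hb.neg_one_pow
    have r2 : (-1:ℂ)^q.natAbs = 1 := hc.neg_one_pow
    have r3 : (-1:ℂ)^(q.natAbs-μ) = -1 := Odd.neg_one_pow (Nat.odd_iff.mpr (by omega))
    rw [r1, r2, r3]
    field_simp
    ring
  · have hbm : μ % 2 = 1 := Nat.odd_iff.mp hb
    have hcm : q.natAbs % 2 = 1 := Nat.odd_iff.mp hc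
    have r1 : (-1:ℂ)^μ = -1 := hb.neg_one_pow
    have r2 : (-1:ℂ)^q.natAbs = -1 := hc.neg_one_pow
    have r3 : (-1:ℂ)^(q.natAbs-μ) = 1 := Even.neg_one_pow (Nat.even_iff.mpr (by omega))
    rw [r1, r2, r3]
    field_simp
    ring
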